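/- For every links system L, the vector x* ∈ ℝ^L with x*_ℓ = 1/k for every link ℓ satisfies Σ_{ℓ∈δ_L(S)} x*_ℓ ≥ 1 for every nonempty proper subset S ⊆ {1,…,n} whose cut capacity in G is less than 5, with equality whenever S is one of the sets N_1,…,N_{n−1}, Q_1,…,Q_{k−1}. -/
import Mathlib


open Finset

namespace CoverSmallCuts

/-- `nn k` is the number `n = 2 + k(k-1)/2` of nodes. -/
def nn (k : ℕ) : ℕ := 2 + k * (k - 1) / 2

/-- `mm k` is the number `m = k(k-1)/2 + k` of links. -/
def mm (k : ℕ) : ℕ := k * (k - 1) / 2 + k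

/-- The nested set `N_i = {1, …, i}`. -/
def Nset (i : ℕ) : Finset ℕ := Finset.Icc 1 i

/-- The Q-set `Q_j = {2+(j-1)k/2, …, 1+j·k/2}`. -/
def Qset (k j : ℕ) : Finset ℕ := Finset.Icc (2 + (j - 1) * (k / 2)) (1 + j * (k / 2))

/-- Capacity of the path edge `{i, i+1}` of the capacitated graph `G`. -/
def pathCap (k i : ℕ) : ℕ :=
  if i = 1 ∨ i = nn k - 1 then 2
  else if ∃ j ∈ Finset.Icc 1 (k - 1), i ∈ Qset k j ∧ i + 1 ∈ Qset k j then 3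
  else 1

/-- Capacity of the cut `δ(S)` in the capacitated graph `G`: the sum of the capacities
of the edges of `G` with exactly one endpoint in `S`. -/
def cutCap (k : ℕ) (S : Finset ℕ) : ℕ :=
  (∑ i ∈ Finset.Icc 1 (nn k - 1),
      if (i ∈ S) ↔ ((i + 1) ∈ S) then 0 else pathCap k i)
  + (∑ j ∈ Finset.Icc 1 (k - 1),
      if ((1 + (j - 1) * (k / 2)) ∈ S) ↔ ((2 + j * (k / 2)) ∈ S) then 0 else 1)

/-- A links system: the `s,t`-paths `P_1, …, P_{k-1}` are recorded by the function
`node`, where `node i t` is the `t`-th node of the path `P_i` (for `1 ≤ i ≤ k-1` and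
`0 ≤ t ≤ k/2 + 1`); the class `P_k` consists of the single link `{1, n}`. -/
structure LinksSystem (k : ℕ) where
  node : ℕ → ℕ → ℕ
  /-- each path `P_i` starts at `s = 1` -/
  node_first : ∀ i ∈ Finset.Icc 1 (k - 1), node i 0 = 1
  /-- each path `P_i` ends at `t = n` -/
  node_last : ∀ i ∈ Finset.Icc 1 (k - 1), node i (k / 2 + 1) = nn k
  /-- node indices strictly increase along each path -/
  node_mono : ∀ i ∈ Finset.Icc 1 (k - 1), ∀ t ≤ k / 2, node i t < node i (t + 1)
  /-- every node in `{2, …, n-1}` is an internal node of exactly one of `P_1, …, P_{k-1}` -/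
  cover : ∀ v ∈ Finset.Icc 2 (nn k - 1),
      ∃! i, i ∈ Finset.Icc 1 (k - 1) ∧ ∃ t ∈ Finset.Icc 1 (k / 2), node i t = v
  /-- `P_i` has an internal node in `Q_j` iff
  `(i ≤ j ≤ min(i+k/2-1, k-1))` or `(j < i and j ≤ i-k/2)` -/
  meetsQ : ∀ i ∈ Finset.Icc 1 (k - 1), ∀ j ∈ Finset.Icc 1 (k - 1),
      ((∃ t ∈ Finset.Icc 1 (k / 2), node i t ∈ Qset k j) ↔
        ((i ≤ j ∧ j ≤ min (i + k / 2 - 1) (k - 1)) ∨ (j < i ∧ j ≤ i - k / 2)))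

/-- The class `P_i` of links: the edge set of the path `P_i` for `i < k`,
and `{{1, n}}` for `i = k`. -/
def LinksSystem.P {k : ℕ} (LS : LinksSystem k) (i : ℕ) : Finset (Sym2 ℕ) :=
  if i = k then {s(1, nn k)}
  else (Finset.Icc 0 (k / 2)).image fun t => s(LS.node i t, LS.node i (t + 1))

/-- The set `L` of all links. -/
def LinksSystem.links {k : ℕ} (LS : LinksSystem k) : Finset (Sym2 ℕ) :=
  (Finset.Icc 1 k).biUnion LS.P

open scoped Classical in
/-- `deltaL F S` is `δ_F(S)`: the set of links of `F` with exactly one endpoint in `S`. -/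
noncomputable def deltaL (F : Finset (Sym2 ℕ)) (S : Finset ℕ) : Finset (Sym2 ℕ) :=
  F.filter fun e => ∃ a b, e = s(a, b) ∧ a ∈ S ∧ b ∉ S

/-- The 0-1 indicator vector `χ^F` of a set `F` of links. -/
noncomputable def chi (F : Finset (Sym2 ℕ)) : Sym2 ℕ → ℝ :=
  fun e => if e ∈ F then 1 else 0


/-! ### Generic helpers -/

open scoped Classical

lemma ivt (P : ℕ → Prop) : ∀ {v u : ℕ}, u ≤ v → P u → ¬ P v →
    ∃ t, u ≤ t ∧ t < v ∧ P t ∧ ¬ P (t+1) := by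
  intro v
  induction v with
  | zero => intro u hu h1 h2; exact absurd ((Nat.le_zero.mp hu) ▸ h1) h2
  | succ w ih =>
    intro u hu h1 h2
    by_cases hw : P w
    · have hu' : u ≤ w := by
        by_contra h
        have huw : u = w + 1 := by omega
        exact h2 (huw ▸ h1)
      exact ⟨w, hu', by omega, hw, h2⟩
    · have hu' : u ≤ w := by
        rcases Nat.eq_or_lt_of_le hu with h | h
        · exact absurd h1 (h ▸ h2)
        · omega
      obtain ⟨t, ht⟩ := ih hu' h1 hw
      exact ⟨t, ht.1, by omega, ht.2.2⟩

lemma ivt_zero {v : ℕ} (P : ℕ → Prop) (hu : 0 ≤ v) (h1 : P 0) (h2 : ¬ P v) :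
    ∃ t, t < v ∧ P t ∧ ¬ P (t+1) := by
  obtain ⟨t, ht⟩ := ivt P hu h1 h2; exact ⟨t, ht.2.1, ht.2.2⟩

lemma exists_change (P : ℕ → Prop) {u v : ℕ} (huv : u ≤ v) (hne : ¬(P u ↔ P v)) :
    ∃ t, u ≤ t ∧ t < v ∧ ¬(P t ↔ P (t+1)) := by
  by_cases hu : P u
  · have hv : ¬ P v := fun h => hne ⟨fun _ => h, fun _ => hu⟩
    obtain ⟨t, h1, h2, h3, h4⟩ := ivt P huv hu hv
    exact ⟨t, h1, h2, fun h => h4 (h.mp h3)⟩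
  · have hv : P v := by by_contra hv; exact hne ⟨fun h => absurd h hu, fun h => absurd h hv⟩
    obtain ⟨t, h1, h2, h3, h4⟩ := ivt (fun x => ¬ P x) huv hu (fun h => h hv)
    exact ⟨t, h1, h2, fun h => h4 (fun hp => h3 (h.mpr hp))⟩

lemma sum_ite_ge {A D : Finset ℕ} (hD : D ⊆ A) (w : ℕ → ℕ) (c : ℕ → Prop) [DecidablePred c]
    (hc : ∀ p ∈ D, ¬ c p) :
    (∑ p ∈ D, w p) ≤ ∑ p ∈ A, (if c p then 0 else w p) := by
  calc (∑ p ∈ D, w p) = ∑ p ∈ D, (if c p then 0 else w p) := by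
        apply Finset.sum_congr rfl; intro p hp; rw [if_neg (hc p hp)]
    _ ≤ _ := Finset.sum_le_sum_of_subset_of_nonneg hD (by intros; positivity)

/-! ### Path structure lemmas -/

namespace LinksSystem

variable {k : ℕ} (LS : LinksSystem k)

lemma node_lt {i : ℕ} (hi : i ∈ Finset.Icc 1 (k-1)) :
    ∀ {t t' : ℕ}, t < t' → t' ≤ k/2+1 → LS.node i t < LS.node i t' := by
  intro t t' h1 h2
  induction t' with
  | zero => omega
  | succ w ih =>
    have hw : LS.node i w < LS.node i (w+1) := LS.node_mono i hi w (by omega)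
    rcases Nat.lt_or_ge t w with h | h
    · exact lt_trans (ih h (by omega)) hw
    · have ht : t = w := by omega
      exact ht ▸ hw

lemma node_ge1 {i t : ℕ} (hi : i ∈ Finset.Icc 1 (k-1)) (ht : t ≤ k/2+1) :
    1 ≤ LS.node i t := by
  rcases Nat.eq_zero_or_pos t with h | h
  · rw [h, LS.node_first i hi]
  · have := LS.node_lt hi h ht
    rw [LS.node_first i hi] at this; omega

lemma node_le {i t : ℕ} (hi : i ∈ Finset.Icc 1 (k-1)) (ht : t ≤ k/2+1) :
    LS.node i t ≤ nn k := by
  rcases Nat.lt_or_ge t (k/2+1) with h | h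
  · have := LS.node_lt hi h (le_refl _)
    rw [LS.node_last i hi] at this; omega
  · have : t = k/2+1 := by omega
    rw [this, LS.node_last i hi]

lemma node_internal {i t : ℕ} (hi : i ∈ Finset.Icc 1 (k-1)) (ht : t ∈ Finset.Icc 1 (k/2)) :
    LS.node i t ∈ Finset.Icc 2 (nn k - 1) := by
  simp only [Finset.mem_Icc] at ht ⊢
  constructor
  · have := LS.node_lt hi (show 0 < t by omega) (by omega)
    rw [LS.node_first i hi] at this; omega
  · have := LS.node_lt hi (show t < k/2+1 by omega) (le_refl _)
    rw [LS.node_last i hi] at this; omega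

lemma node_inj {i t t' : ℕ} (hi : i ∈ Finset.Icc 1 (k-1)) (ht : t ≤ k/2+1)
    (ht' : t' ≤ k/2+1) (heq : LS.node i t = LS.node i t') : t = t' := by
  rcases lt_trichotomy t t' with h | h | h
  · have := LS.node_lt hi h ht'; omega
  · exact h
  · have := LS.node_lt hi h ht; omega

lemma node_unique {i i' t t' : ℕ} (hi : i ∈ Finset.Icc 1 (k-1)) (hi' : i' ∈ Finset.Icc 1 (k-1))
    (ht : t ∈ Finset.Icc 1 (k/2)) (ht' : t' ∈ Finset.Icc 1 (k/2))
    (heq : LS.node i t = LS.node i' t') : i = i' ∧ t = t' := by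
  have hv := LS.node_internal hi ht
  obtain ⟨w, _, huniq⟩ := LS.cover (LS.node i t) hv
  have h1 : i = w := huniq i ⟨hi, t, ht, rfl⟩
  have h2 : i' = w := huniq i' ⟨hi', t', ht', heq.symm⟩
  subst h1; rw [← h2] at heq ⊢
  simp only [Finset.mem_Icc] at ht ht'
  exact ⟨rfl, LS.node_inj hi' (by omega) (by omega) heq⟩

end LinksSystem

/-! ### Counting links crossing a set -/

/-- Number of edges of path `P_i` crossing `S`. -/
noncomputable def crossCount {k : ℕ} (LS : LinksSystem k) (S : Finset ℕ) (i : ℕ) : ℕ :=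
  ((Finset.Icc 0 (k/2)).filter
    (fun t => ¬(LS.node i t ∈ S ↔ LS.node i (t+1) ∈ S))).card

lemma cross_cond (S : Finset ℕ) (u v : ℕ) :
    (∃ a b, s(u,v) = s(a,b) ∧ a ∈ S ∧ b ∉ S) ↔ ¬(u ∈ S ↔ v ∈ S) := by
  constructor
  · rintro ⟨a, b, hab, ha, hb⟩
    rw [Sym2.eq_iff] at hab
    rcases hab with ⟨rfl, rfl⟩ | ⟨rfl, rfl⟩ <;> tauto
  · intro h
    by_cases hu : u ∈ S
    · exact ⟨u, v, rfl, hu, fun hv => h ⟨fun _ => hv, fun _ => hu⟩⟩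
    · refine ⟨v, u, Sym2.eq_swap, ?_, hu⟩
      by_contra hv; exact h ⟨fun h' => absurd h' hu, fun h' => absurd h' hv⟩

namespace LinksSystem

variable {k : ℕ} (LS : LinksSystem k)

lemma edge_ne_st {i t : ℕ} (hk : 4 ≤ k) (hi : i ∈ Finset.Icc 1 (k-1))
    (ht : t ∈ Finset.Icc 0 (k/2)) :
    s(LS.node i t, LS.node i (t+1)) ≠ s(1, nn k) := by
  intro h
  rw [Sym2.eq_iff] at h
  simp only [Finset.mem_Icc] at ht
  have hk2 : 2 ≤ k/2 := by omega
  have hnn : 2 ≤ nn k := Nat.le_add_right 2 _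
  rcases h with ⟨h1, h2'⟩ | ⟨h1, h2'⟩
  · have ht0 : t = 0 := by
      by_contra h0
      have := LS.node_lt hi (show 0 < t by omega) (by omega)
      rw [LS.node_first i hi] at this; omega
    have : LS.node i (t+1) < nn k := by
      have := LS.node_lt hi (show t+1 < k/2+1 by omega) (le_refl _)
      rw [LS.node_last i hi] at this; exact this
    omega
  · have hlt := LS.node_lt hi (show t < t+1 by omega) (by omega)
    have hle := LS.node_le hi (show t ≤ k/2+1 by omega)
    omega

lemma edge_inj {i i' t t' : ℕ} (hi : i ∈ Finset.Icc 1 (k-1)) (hi' : i' ∈ Finset.Icc 1 (k-1))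
    (ht : t ∈ Finset.Icc 0 (k/2)) (ht' : t' ∈ Finset.Icc 0 (k/2))
    (heq : s(LS.node i t, LS.node i (t+1)) = s(LS.node i' t', LS.node i' (t'+1))) :
    i = i' ∧ t = t' := by
  simp only [Finset.mem_Icc] at ht ht'
  rw [Sym2.eq_iff] at heq
  rcases heq with ⟨e1, e2⟩ | ⟨e1, e2⟩
  · rcases Nat.lt_or_ge t (k/2) with h1 | h1
    · rcases Nat.lt_or_ge t' (k/2) with h2 | h2
      · have := LS.node_unique hi hi' (by simp; omega) (by simp; omega) e2
        exact ⟨this.1, by omega⟩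
      · have ht'' : t' = k/2 := by omega
        have : LS.node i (t+1) < nn k := by
          have := LS.node_lt hi (show t+1 < k/2+1 by omega) (le_refl _)
          rw [LS.node_last i hi] at this; exact this
        rw [e2, ht''] at this
        rw [LS.node_last i' hi'] at this; omega
    · have htt : t = k/2 := by omega
      rcases Nat.lt_or_ge t' (k/2) with h2 | h2
      · have : LS.node i' (t'+1) < nn k := by
          have := LS.node_lt hi' (show t'+1 < k/2+1 by omega) (le_refl _)
          rw [LS.node_last i' hi'] at this; exact this
        rw [← e2, htt] at this
        rw [LS.node_last i hi] at this; omega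
      · have htt' : t' = k/2 := by omega
        subst htt; subst htt'
        have hk2 : 1 ≤ k/2 := by
          simp only [Finset.mem_Icc] at hi; omega
        have := LS.node_unique hi hi' (by simp; omega) (by simp; omega) e1
        exact ⟨this.1, rfl⟩
  · have l1 := LS.node_lt hi (show t < t+1 by omega) (by omega)
    have l2 := LS.node_lt hi' (show t' < t'+1 by omega) (by omega)
    omega

lemma P_pairwise_disjoint (hk : 4 ≤ k) :
    ∀ i ∈ Finset.Icc 1 k, ∀ i' ∈ Finset.Icc 1 k, i ≠ i' →
      Disjoint (LS.P i) (LS.P i') := by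
  intro i hi i' hi' hne
  rw [Finset.disjoint_left]
  intro e he he'
  unfold LinksSystem.P at he he'
  simp only [Finset.mem_Icc] at hi hi'
  by_cases hik : i = k <;> by_cases hik' : i' = k
  · exact hne (hik.trans hik'.symm)
  · rw [if_pos hik] at he; rw [if_neg hik'] at he'
    simp only [Finset.mem_singleton] at he
    simp only [Finset.mem_image] at he'
    obtain ⟨t, ht, hte⟩ := he'
    exact LS.edge_ne_st hk (by simp; omega) ht (hte.trans he)
  · rw [if_neg hik] at he; rw [if_pos hik'] at he'
    simp only [Finset.mem_singleton] at he'
    simp only [Finset.mem_image] at he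
    obtain ⟨t, ht, hte⟩ := he
    exact LS.edge_ne_st hk (by simp; omega) ht (hte.trans he')
  · rw [if_neg hik] at he; rw [if_neg hik'] at he'
    simp only [Finset.mem_image] at he he'
    obtain ⟨t, ht, hte⟩ := he
    obtain ⟨t', ht', hte'⟩ := he'
    have := LS.edge_inj (i := i) (i' := i') (by simp; omega) (by simp; omega) ht ht'
      (hte.trans hte'.symm)
    exact hne this.1

lemma card_P_filter (S : Finset ℕ) {i : ℕ} (hi : i ∈ Finset.Icc 1 (k-1)) :
    ((LS.P i).filter (fun e => ∃ a b, e = s(a, b) ∧ a ∈ S ∧ b ∉ S)).card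
      = crossCount LS S i := by
  have hik : i ≠ k := by simp only [Finset.mem_Icc] at hi; omega
  unfold LinksSystem.P
  rw [if_neg hik]
  rw [Finset.filter_image]
  rw [Finset.card_image_of_injOn]
  · unfold crossCount
    congr 1
    apply Finset.filter_congr
    intro t ht
    exact cross_cond S _ _
  · intro t ht t' ht' heq
    have h1 := (Finset.mem_filter.mp ht).1
    have h2 := (Finset.mem_filter.mp ht').1
    exact (LS.edge_inj hi hi h1 h2 heq).2

lemma card_deltaL (hk : 4 ≤ k) (S : Finset ℕ) :
    (deltaL LS.links S).card =
      (∑ i ∈ Finset.Icc 1 (k-1), crossCount LS S i)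
        + (if (1 ∈ S ↔ nn k ∈ S) then 0 else 1) := by
  unfold deltaL LinksSystem.links
  rw [Finset.filter_biUnion]
  rw [Finset.card_biUnion (fun i hi i' hi' hne =>
    Finset.disjoint_filter_filter (LS.P_pairwise_disjoint hk i hi i' hi' hne))]
  have hsplit : Finset.Icc 1 k = insert k (Finset.Icc 1 (k-1)) := by
    ext x; simp; omega
  rw [hsplit, Finset.sum_insert (by simp; omega)]
  rw [add_comm]
  congr 1
  · exact Finset.sum_congr rfl (fun i hi => LS.card_P_filter S hi)
  · unfold LinksSystem.P
    rw [if_pos rfl, Finset.filter_singleton]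
    by_cases h : (1 ∈ S ↔ nn k ∈ S)
    · rw [if_neg, if_pos h]
      · simp
      · rw [cross_cond]; exact fun h' => h' h
    · rw [if_pos, if_neg h]
      · simp
      · rw [cross_cond]; exact h

end LinksSystem

/-! ### Arithmetic facts about `nn` and `Qset` -/

lemma pred_mul {j q : ℕ} (hj : 1 ≤ j) : j * q = (j-1)*q + q := by
  obtain ⟨j', rfl⟩ : ∃ j', j = j'+1 := ⟨j-1, by omega⟩
  simp [Nat.add_mul]

lemma nn_eq {k : ℕ} (hke : 2*(k/2) = k) : nn k = 2 + (k-1)*(k/2) := by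
  unfold nn
  have h : k*(k-1) = (k-1)*(k/2) * 2 := by
    calc k*(k-1) = (2*(k/2))*(k-1) := by rw [hke]
    _ = (k-1)*(k/2)*2 := by ring
  rw [h, Nat.mul_div_cancel _ (by norm_num : 0 < 2)]

lemma one_notMem_Qset {k j : ℕ} : 1 ∉ Qset k j := by
  unfold Qset; simp only [Finset.mem_Icc]; omega

lemma nn_notMem_Qset {k j : ℕ} (hke : 2*(k/2) = k) (hj : j ≤ k-1) : nn k ∉ Qset k j := by
  unfold Qset; simp only [Finset.mem_Icc]
  have h1 : j * (k/2) ≤ (k-1) * (k/2) := Nat.mul_le_mul_right _ hj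
  have h2 := nn_eq hke
  omega

lemma Qset_subset {k j : ℕ} (hk : 4 ≤ k) (hke : 2*(k/2) = k) (hj1 : 1 ≤ j) (hj2 : j ≤ k-1)
    {v : ℕ} (hv : v ∈ Qset k j) : v ∈ Finset.Icc 2 (nn k - 1) := by
  unfold Qset at hv
  simp only [Finset.mem_Icc] at hv ⊢
  have h1 : j * (k/2) ≤ (k-1) * (k/2) := Nat.mul_le_mul_right _ hj2
  have h2 := nn_eq hke
  omega

namespace LinksSystem

variable {k : ℕ} (LS : LinksSystem k)

/-! ### crossCount for nested sets -/

lemma crossCount_Nset (hk : 4 ≤ k) {i v : ℕ} (hi : i ∈ Finset.Icc 1 (k-1))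
    (hv1 : 1 ≤ v) (hv2 : v ≤ nn k - 1) : crossCount LS (Nset v) i = 1 := by
  unfold crossCount
  rw [Finset.card_eq_one]
  have hnn : 2 ≤ nn k := Nat.le_add_right 2 _
  have hmem : ∀ t, t ≤ k/2+1 → (LS.node i t ∈ Nset v ↔ LS.node i t ≤ v) := by
    intro t ht
    unfold Nset
    simp only [Finset.mem_Icc]
    exact ⟨fun h => h.2, fun h => ⟨LS.node_ge1 hi ht, h⟩⟩
  have h0 : LS.node i 0 ≤ v := by rw [LS.node_first i hi]; exact hv1
  have hlast : ¬ (LS.node i (k/2+1) ≤ v) := by rw [LS.node_last i hi]; omega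
  obtain ⟨t0, ht0v, hP, hnP⟩ := ivt_zero (fun t => LS.node i t ≤ v) (by omega) h0 hlast
  refine ⟨t0, ?_⟩
  ext t
  simp only [Finset.mem_filter, Finset.mem_Icc, Finset.mem_singleton]
  constructor
  · rintro ⟨⟨-, ht⟩, hcross⟩
    rw [hmem t (by omega), hmem (t+1) (by omega)] at hcross
    have hmono := LS.node_lt hi (show t < t+1 by omega) (by omega)
    have hA : LS.node i t ≤ v := by
      by_contra h'
      have hB : ¬ LS.node i (t+1) ≤ v := fun hh => h' (by omega)
      exact hcross (iff_of_false h' hB)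
    have hB : ¬ LS.node i (t+1) ≤ v := by
      intro hh
      exact hcross (iff_of_true (by omega) hh)
    rcases lt_trichotomy t t0 with h | h | h
    · exfalso
      have hle : LS.node i (t+1) ≤ LS.node i t0 := by
        rcases Nat.eq_or_lt_of_le (show t+1 ≤ t0 by omega) with he | hl
        · rw [he]
        · exact le_of_lt (LS.node_lt hi hl (by omega))
      omega
    · exact h
    · exfalso
      have hle : LS.node i (t0+1) ≤ LS.node i t := by
        rcases Nat.eq_or_lt_of_le (show t0+1 ≤ t by omega) with he | hl
        · rw [he]
        · exact le_of_lt (LS.node_lt hi hl (by omega))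
      omega
  · intro heq
    rw [heq]
    refine ⟨⟨Nat.zero_le _, by omega⟩, ?_⟩
    rw [hmem t0 (by omega), hmem (t0+1) (by omega)]
    exact fun hh => hnP (hh.mp hP)

/-! ### crossCount for Q-sets -/

lemma sum_crossCount_Qset (hk : 4 ≤ k) (hke : 2*(k/2) = k) {j : ℕ}
    (hj : j ∈ Finset.Icc 1 (k-1)) :
    ∑ i ∈ Finset.Icc 1 (k-1), crossCount LS (Qset k j) i = k := by
  have hj' := Finset.mem_Icc.mp hj
  have hnn := nn_eq hke
  have hq2 : 2 ≤ k/2 := by omega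
  -- the count of internal nodes of P_i lying in Q_j
  let cnt : ℕ → ℕ := fun i =>
    ((Finset.Icc 1 (k/2)).filter (fun t => LS.node i t ∈ Qset k j)).card
  have hcnt : ∀ i, cnt i = ((Finset.Icc 1 (k/2)).filter
      (fun t => LS.node i t ∈ Qset k j)).card := fun i => rfl
  -- (q2) total count equals k/2
  have hq2sum : ∑ i ∈ Finset.Icc 1 (k-1), cnt i = k/2 := by
    have hbi : (Finset.Icc 1 (k-1)).biUnion (fun i =>
        ((Finset.Icc 1 (k/2)).filter (fun t => LS.node i t ∈ Qset k j)).image (LS.node i))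
        = Qset k j := by
      ext v
      simp only [Finset.mem_biUnion, Finset.mem_image, Finset.mem_filter]
      constructor
      · rintro ⟨i, hi, t, ⟨ht, hQ⟩, rfl⟩; exact hQ
      · intro hv
        obtain ⟨i, ⟨hi, t, ht, rfl⟩, -⟩ := LS.cover v (Qset_subset hk hke hj'.1 hj'.2 hv)
        exact ⟨i, hi, t, ⟨ht, hv⟩, rfl⟩
    have hdisj : ∀ i ∈ Finset.Icc 1 (k-1), ∀ i' ∈ Finset.Icc 1 (k-1), i ≠ i' →
        Disjoint (((Finset.Icc 1 (k/2)).filter (fun t => LS.node i t ∈ Qset k j)).image (LS.node i))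
          (((Finset.Icc 1 (k/2)).filter (fun t => LS.node i' t ∈ Qset k j)).image (LS.node i')) := by
      intro i hi i' hi' hne
      rw [Finset.disjoint_left]
      intro v hv hv'
      simp only [Finset.mem_image, Finset.mem_filter] at hv hv'
      obtain ⟨t, ⟨ht, -⟩, rfl⟩ := hv
      obtain ⟨t', ⟨ht', -⟩, heq⟩ := hv'
      exact hne (LS.node_unique hi hi' ht ht' heq.symm).1
    have hcardQ : (Qset k j).card = k/2 := by
      unfold Qset; rw [Nat.card_Icc]
      have := pred_mul (q := k/2) hj'.1
      omega
    rw [← hcardQ, ← hbi, Finset.card_biUnion hdisj]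
    apply Finset.sum_congr rfl
    intro i hi
    rw [Finset.card_image_of_injOn]
    intro t ht t' ht' heq
    have h1 := (Finset.mem_filter.mp ht).1
    have h2 := (Finset.mem_filter.mp ht').1
    simp only [Finset.mem_Icc] at h1 h2
    exact LS.node_inj hi (by omega) (by omega) heq
  -- (q3) number of paths meeting Q_j is k/2
  have hq3 : ∑ i ∈ Finset.Icc 1 (k-1),
      (if (∃ t ∈ Finset.Icc 1 (k/2), LS.node i t ∈ Qset k j) then (2:ℕ) else 0) = k := by
    have step1 : ∀ i ∈ Finset.Icc 1 (k-1),
        (if (∃ t ∈ Finset.Icc 1 (k/2), LS.node i t ∈ Qset k j) then (2:ℕ) else 0)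
        = (if ((i ≤ j ∧ j ≤ min (i + k/2 - 1) (k-1)) ∨ (j < i ∧ j ≤ i - k/2)) then 2 else 0) := by
      intro i hi
      by_cases hc : ∃ t ∈ Finset.Icc 1 (k/2), LS.node i t ∈ Qset k j
      · rw [if_pos hc, if_pos ((LS.meetsQ i hi j hj).mp hc)]
      · rw [if_neg hc, if_neg (fun h => hc ((LS.meetsQ i hi j hj).mpr h))]
    rw [Finset.sum_congr rfl step1, ← Finset.sum_filter]
    have hfil : (Finset.Icc 1 (k-1)).filter
        (fun i => (i ≤ j ∧ j ≤ min (i + k/2 - 1) (k-1)) ∨ (j < i ∧ j ≤ i - k/2))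
        = (Finset.Icc (max 1 (j+1-(k/2))) j ∪ Finset.Icc (j+(k/2)) (k-1)) := by
      ext i
      simp only [Finset.mem_filter, Finset.mem_Icc, Finset.mem_union]
      omega
    rw [hfil, Finset.sum_const, Finset.card_union_of_disjoint]
    · rw [Nat.card_Icc, Nat.card_Icc, smul_eq_mul]
      omega
    · rw [Finset.disjoint_left]
      intro x hx hx'
      simp only [Finset.mem_Icc] at hx hx'
      omega
  -- (q4) per-path upper bound
  have hq4 : ∀ i ∈ Finset.Icc 1 (k-1), crossCount LS (Qset k j) i ≤ 2 * cnt i := by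
    intro i hi
    unfold crossCount
    set B := (Finset.Icc 1 (k/2)).filter (fun t => LS.node i t ∈ Qset k j) with hB
    have hsub : (Finset.Icc 0 (k/2)).filter
        (fun t => ¬(LS.node i t ∈ Qset k j ↔ LS.node i (t+1) ∈ Qset k j))
        ⊆ B ∪ B.image (fun s => s - 1) := by
      intro t ht
      simp only [Finset.mem_filter, Finset.mem_Icc, Finset.mem_union, Finset.mem_image, hB]
        at ht ⊢
      obtain ⟨ht2, hcross⟩ := ht
      by_cases h1 : LS.node i t ∈ Qset k j
      · left
        refine ⟨⟨?_, ht2.2⟩, h1⟩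
        by_contra h0
        have ht0 : t = 0 := by omega
        rw [ht0, LS.node_first i hi] at h1
        exact one_notMem_Qset h1
      · have h2 : LS.node i (t+1) ∈ Qset k j := by
          by_contra h2; exact hcross (iff_of_false h1 h2)
        have htk : t+1 ≤ k/2 := by
          by_contra h0
          have ht1 : t+1 = k/2+1 := by omega
          rw [ht1, LS.node_last i hi] at h2
          exact nn_notMem_Qset hke hj'.2 h2
        right
        exact ⟨t+1, ⟨⟨by omega, htk⟩, h2⟩, by omega⟩
    calc ((Finset.Icc 0 (k/2)).filter
        (fun t => ¬(LS.node i t ∈ Qset k j ↔ LS.node i (t+1) ∈ Qset k j))).card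
        ≤ (B ∪ B.image (fun s => s - 1)).card := Finset.card_le_card hsub
      _ ≤ B.card + (B.image (fun s => s - 1)).card := Finset.card_union_le _ _
      _ ≤ B.card + B.card := by
          have := Finset.card_image_le (s := B) (f := fun s => s - 1)
          omega
      _ = 2 * cnt i := by rw [hcnt i, ← hB]; omega
  -- (q5) per-path lower bound
  have hq5 : ∀ i ∈ Finset.Icc 1 (k-1),
      (if (∃ t ∈ Finset.Icc 1 (k/2), LS.node i t ∈ Qset k j) then (2:ℕ) else 0)
        ≤ crossCount LS (Qset k j) i := by
    intro i hi
    by_cases hme : ∃ t ∈ Finset.Icc 1 (k/2), LS.node i t ∈ Qset k j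
    · rw [if_pos hme]
      obtain ⟨s, hs, hsQ⟩ := hme
      simp only [Finset.mem_Icc] at hs
      have hP0 : ¬ (LS.node i 0 ∈ Qset k j) := by
        rw [LS.node_first i hi]; exact one_notMem_Qset
      have hPlast : ¬ (LS.node i (k/2+1) ∈ Qset k j) := by
        rw [LS.node_last i hi]; exact nn_notMem_Qset hke hj'.2
      obtain ⟨t1, -, ht1s, ht1c⟩ := exists_change (fun t => LS.node i t ∈ Qset k j)
        (show 0 ≤ s by omega) (fun hiff => hP0 (hiff.mpr hsQ))
      obtain ⟨t2, ht2s, ht2e, ht2c⟩ := exists_change (fun t => LS.node i t ∈ Qset k j)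
        (show s ≤ k/2+1 by omega) (fun hiff => hPlast (hiff.mp hsQ))
      have hne : t1 ≠ t2 := by omega
      unfold crossCount
      have hsub2 : ({t1, t2} : Finset ℕ) ⊆ (Finset.Icc 0 (k/2)).filter
          (fun t => ¬(LS.node i t ∈ Qset k j ↔ LS.node i (t+1) ∈ Qset k j)) := by
        intro x hx
        simp only [Finset.mem_insert, Finset.mem_singleton] at hx
        simp only [Finset.mem_filter, Finset.mem_Icc]
        rcases hx with rfl | rfl
        · exact ⟨⟨Nat.zero_le _, by omega⟩, ht1c⟩
        · exact ⟨⟨Nat.zero_le _, by omega⟩, ht2c⟩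
      calc (2:ℕ) = ({t1, t2} : Finset ℕ).card := (Finset.card_pair hne).symm
        _ ≤ _ := Finset.card_le_card hsub2
    · rw [if_neg hme]; exact Nat.zero_le _
  -- combine
  have hupper : ∑ i ∈ Finset.Icc 1 (k-1), crossCount LS (Qset k j) i ≤ k := by
    calc ∑ i ∈ Finset.Icc 1 (k-1), crossCount LS (Qset k j) i
        ≤ ∑ i ∈ Finset.Icc 1 (k-1), 2 * cnt i := Finset.sum_le_sum hq4
      _ = 2 * ∑ i ∈ Finset.Icc 1 (k-1), cnt i := by rw [Finset.mul_sum]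
      _ = k := by rw [hq2sum]; omega
  have hlower : k ≤ ∑ i ∈ Finset.Icc 1 (k-1), crossCount LS (Qset k j) i := by
    calc k = ∑ i ∈ Finset.Icc 1 (k-1),
        (if (∃ t ∈ Finset.Icc 1 (k/2), LS.node i t ∈ Qset k j) then (2:ℕ) else 0) := hq3.symm
      _ ≤ _ := Finset.sum_le_sum hq5
  omega

end LinksSystem

/-! ### Path capacities -/

lemma pathCap_pos (k p : ℕ) : 1 ≤ pathCap k p := by
  unfold pathCap; split_ifs <;> omega

lemma pathCap_cases {k p : ℕ} (hk : 4 ≤ k) (hke : 2*(k/2) = k) (hp1 : 1 ≤ p)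
    (hp2 : p ≤ nn k - 1) :
    (pathCap k p = 2 ∧ (p = 1 ∨ p = nn k - 1)) ∨ pathCap k p = 3 ∨
      (pathCap k p = 1 ∧ ∃ j, 1 ≤ j ∧ j ≤ k-2 ∧ p = 1 + j*(k/2)) := by
  have hnn := nn_eq hke
  have hq : 2 ≤ k/2 := by omega
  unfold pathCap
  by_cases h1 : p = 1 ∨ p = nn k - 1
  · rw [if_pos h1]; exact Or.inl ⟨rfl, h1⟩
  · rw [if_neg h1]
    by_cases h2 : ∃ j ∈ Finset.Icc 1 (k-1), p ∈ Qset k j ∧ p+1 ∈ Qset k j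
    · rw [if_pos h2]; exact Or.inr (Or.inl rfl)
    · rw [if_neg h2]; right; right
      refine ⟨rfl, ?_⟩
      push_neg at h1
      have hp2' : p ≤ (k-1)*(k/2) := by omega
      obtain ⟨q, r, hr, hpr⟩ : ∃ q r, r < k/2 ∧ p - 2 = q*(k/2) + r := by
        refine ⟨(p-2)/(k/2), (p-2)%(k/2), Nat.mod_lt _ (by omega), ?_⟩
        rw [Nat.mul_comm]
        exact (Nat.div_add_mod _ _).symm
      have hql : q ≤ k-2 := by
        by_contra hq'
        have : (k-1)*(k/2) ≤ q*(k/2) := Nat.mul_le_mul_right _ (by omega)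
        omega
      have hmul : (q+1)*(k/2) = q*(k/2) + k/2 := by ring
      have hpmem : p ∈ Qset k (q+1) := by
        unfold Qset
        simp only [Finset.mem_Icc, Nat.add_sub_cancel]
        omega
      have hnp : p+1 ∉ Qset k (q+1) := by
        intro hmem
        exact h2 ⟨q+1, Finset.mem_Icc.mpr ⟨by omega, by omega⟩, hpmem, hmem⟩
      unfold Qset at hnp hpmem
      simp only [Finset.mem_Icc, Nat.add_sub_cancel, not_and, not_le] at hnp hpmem
      refine ⟨q+1, by omega, ?_, ?_⟩
      · -- q+1 ≤ k-2
        by_contra hq'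
        have hqk : q+1 = k-1 := by omega
        have : p = 1 + (q+1)*(k/2) := by
          have := hnp (by omega); omega
        rw [hqk] at this
        omega
      · have := hnp (by omega); omega

/-! ### Classification of small cuts -/

lemma cut_classify {k : ℕ} (hk : 4 ≤ k) (hke : 2*(k/2) = k) {S : Finset ℕ}
    (hne : S.Nonempty) (hsub : S ⊆ Finset.Icc 2 (nn k - 1)) (hcap : cutCap k S ≤ 4) :
    ∃ j, 1 ≤ j ∧ j ≤ k-1 ∧ S = Qset k j := by
  have hnn := nn_eq hke
  have hq : 2 ≤ k/2 := by omega
  have hbig : 3*2 ≤ (k-1)*(k/2) := Nat.mul_le_mul (by omega) (by omega)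
  set a := S.min' hne with hadef
  set b := S.max' hne with hbdef
  have ha : a ∈ S := S.min'_mem hne
  have hb : b ∈ S := S.max'_mem hne
  have hax : ∀ x ∈ S, a ≤ x := fun x hx => S.min'_le x hx
  have hbx : ∀ x ∈ S, x ≤ b := fun x hx => S.le_max' x hx
  have haI := Finset.mem_Icc.mp (hsub ha)
  have hbI := Finset.mem_Icc.mp (hsub hb)
  have hab : a ≤ b := hax b hb
  -- key bound from the cut capacity
  have key : ∀ D E : Finset ℕ, D ⊆ Finset.Icc 1 (nn k - 1) →
      (∀ p ∈ D, ¬(p ∈ S ↔ p+1 ∈ S)) → E ⊆ Finset.Icc 1 (k-1) →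
      (∀ j' ∈ E, ¬((1+(j'-1)*(k/2)) ∈ S ↔ (2+j'*(k/2)) ∈ S)) →
      (∑ p ∈ D, pathCap k p) + E.card ≤ 4 := by
    intro D E hD hDc hE hEc
    have h1 : (∑ p ∈ D, pathCap k p) ≤ ∑ i ∈ Finset.Icc 1 (nn k - 1),
        (if (i ∈ S) ↔ ((i + 1) ∈ S) then 0 else pathCap k i) :=
      sum_ite_ge hD _ _ hDc
    have h2 : E.card ≤ ∑ j' ∈ Finset.Icc 1 (k-1),
        (if ((1 + (j' - 1) * (k / 2)) ∈ S) ↔ ((2 + j' * (k / 2)) ∈ S) then 0 else 1) := by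
      calc E.card = ∑ _p ∈ E, 1 := (Finset.card_eq_sum_ones E)
        _ ≤ _ := sum_ite_ge hE _ _ hEc
    unfold cutCap at hcap
    omega
  -- crossing facts at the boundary of S
  have hamem : a - 1 ∉ S := fun h => by have := hax _ h; omega
  have hbmem : b + 1 ∉ S := fun h => by have := hbx _ h; omega
  have hcrA : ¬((a-1) ∈ S ↔ (a-1)+1 ∈ S) := by
    have h1 : a - 1 + 1 = a := by omega
    rw [h1]; exact fun hiff => hamem (hiff.mpr ha)
  have hcrB : ¬(b ∈ S ↔ b+1 ∈ S) := fun hiff => hbmem (hiff.mp hb)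
  have hDab : ({a-1, b} : Finset ℕ) ⊆ Finset.Icc 1 (nn k - 1) := by
    intro x hx
    simp only [Finset.mem_insert, Finset.mem_singleton] at hx
    simp only [Finset.mem_Icc]
    rcases hx with rfl | rfl <;> omega
  have hDabc : ∀ p ∈ ({a-1, b} : Finset ℕ), ¬(p ∈ S ↔ p+1 ∈ S) := by
    intro p hp
    simp only [Finset.mem_insert, Finset.mem_singleton] at hp
    rcases hp with rfl | rfl
    exacts [hcrA, hcrB]
  have hsumab : ∑ p ∈ ({a-1, b} : Finset ℕ), pathCap k p = pathCap k (a-1) + pathCap k b :=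
    Finset.sum_pair (by omega)
  -- extra edges crossing because of the min / max
  have hEL : ∀ j', 1 ≤ j' → j' ≤ k-2 → a = 2 + j'*(k/2) →
      ¬((1+(j'-1)*(k/2)) ∈ S ↔ (2+j'*(k/2)) ∈ S) := by
    intro j' h1 h2 hform
    have hm := pred_mul (q := k/2) h1
    have hnot : (1+(j'-1)*(k/2)) ∉ S := fun h => by have := hax _ h; omega
    exact fun hiff => hnot (hiff.mpr (hform ▸ ha))
  have hER : ∀ j', 1 ≤ j' → j' ≤ k-2 → b = 1 + j'*(k/2) →
      ¬((1+((j'+1)-1)*(k/2)) ∈ S ↔ (2+(j'+1)*(k/2)) ∈ S) := by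
    intro j' h1 h2 hform
    have hm : (j'+1)*(k/2) = j'*(k/2) + k/2 := by ring
    have hsimp : (j'+1)-1 = j' := by omega
    rw [hsimp]
    have hnot : (2+(j'+1)*(k/2)) ∉ S := fun h => by have := hbx _ h; omega
    exact fun hiff => hnot (hiff.mp (hform ▸ hb))
  -- if S is not an interval, there are two more crossing path edges
  have hIntStep : S ≠ Finset.Icc a b → ∃ t1 t2, a - 1 < t1 ∧ t1 < t2 ∧ t2 < b ∧
      ¬(t1 ∈ S ↔ t1+1 ∈ S) ∧ ¬(t2 ∈ S ↔ t2+1 ∈ S) := by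
    intro hSne
    have hSsub : S ⊆ Finset.Icc a b := fun x hx => Finset.mem_Icc.mpr ⟨hax x hx, hbx x hx⟩
    obtain ⟨c, hc1, hc2⟩ : ∃ c, c ∈ Finset.Icc a b ∧ c ∉ S := by
      by_contra hcc
      push_neg at hcc
      exact hSne (Finset.Subset.antisymm hSsub hcc)
    have hcab := Finset.mem_Icc.mp hc1
    have hca : a < c := lt_of_le_of_ne hcab.1 (fun h => hc2 (h ▸ ha))
    have hcb : c < b := lt_of_le_of_ne hcab.2 (fun h => hc2 (h.symm ▸ hb))
    obtain ⟨t1, ht1a, ht1c, hp1, hnp1⟩ := ivt (fun x => x ∈ S) (le_of_lt hca) ha hc2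
    obtain ⟨t2, ht2c, ht2b, hp2, hnp2⟩ := ivt (fun x => x ∉ S) (le_of_lt hcb) hc2 (fun h => h hb)
    refine ⟨t1, t2, by omega, by omega, by omega, ?_, ?_⟩
    · exact fun hiff => hnp1 (hiff.mp hp1)
    · exact fun hiff => hp2 (hiff.mpr (not_not.mp hnp2))
  -- forcing S to be an interval
  have hInterval : ∀ E : Finset ℕ, E ⊆ Finset.Icc 1 (k-1) →
      (∀ j' ∈ E, ¬((1+(j'-1)*(k/2)) ∈ S ↔ (2+j'*(k/2)) ∈ S)) →
      5 ≤ pathCap k (a-1) + pathCap k b + E.card + 2 → S = Finset.Icc a b := by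
    intro E hE hEc hbig'
    by_contra hSne
    obtain ⟨t1, t2, h1, h2, h3, hc1, hc2⟩ := hIntStep hSne
    have hD : ({a-1, t1, t2, b} : Finset ℕ) ⊆ Finset.Icc 1 (nn k - 1) := by
      intro x hx
      simp only [Finset.mem_insert, Finset.mem_singleton] at hx
      simp only [Finset.mem_Icc]
      rcases hx with rfl | rfl | rfl | rfl <;> omega
    have hDc : ∀ p ∈ ({a-1, t1, t2, b} : Finset ℕ), ¬(p ∈ S ↔ p+1 ∈ S) := by
      intro p hp
      simp only [Finset.mem_insert, Finset.mem_singleton] at hp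
      rcases hp with rfl | rfl | rfl | rfl
      exacts [hcrA, hc1, hc2, hcrB]
    have hsum : ∑ p ∈ ({a-1, t1, t2, b} : Finset ℕ), pathCap k p
        = pathCap k (a-1) + (pathCap k t1 + (pathCap k t2 + pathCap k b)) := by
      rw [Finset.sum_insert (by simp; omega), Finset.sum_insert (by simp; omega),
        Finset.sum_pair (by omega)]
    have hk4 := key _ E hD hDc hE hEc
    rw [hsum] at hk4
    have p1 := pathCap_pos k t1
    have p2 := pathCap_pos k t2
    omega
  -- main case analysis on the two boundary capacities
  rcases pathCap_cases hk hke (show 1 ≤ a-1 by omega) (show a-1 ≤ nn k - 1 by omega)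
    with ⟨hA, hA'⟩ | hA | ⟨hA, ja, hja1, hja2, hjaf⟩ <;>
    rcases pathCap_cases hk hke (show 1 ≤ b by omega) (show b ≤ nn k - 1 by omega)
      with ⟨hB, hB'⟩ | hB | ⟨hB, jb, hjb1, hjb2, hjbf⟩
  -- case (2,2)
  · exfalso
    have ha2 : a = 2 := by omega
    have hbn : b = nn k - 1 := by omega
    have hS : S = Finset.Icc a b := by
      apply hInterval ∅ (by simp) (by simp)
      simp only [hA, hB, Finset.card_empty]
      omega
    have h1S : (1:ℕ) ∉ S := by rw [hS]; simp only [Finset.mem_Icc]; omega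
    have h2S : 2+1*(k/2) ∈ S := by
      rw [hS]
      simp only [Finset.mem_Icc]
      have h3q : 3*(k/2) ≤ (k-1)*(k/2) := Nat.mul_le_mul_right _ (by omega)
      omega
    have hE1 : ¬((1+((1:ℕ)-1)*(k/2)) ∈ S ↔ (2+1*(k/2)) ∈ S) := by
      simp only [Nat.sub_self, Nat.zero_mul, Nat.add_zero]
      exact fun hiff => h1S (hiff.mpr h2S)
    have hk4 := key {a-1, b} {1} hDab hDabc
      (by intro x hx; simp only [Finset.mem_singleton] at hx; subst hx
          simp only [Finset.mem_Icc]; omega)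
      (by intro x hx; simp only [Finset.mem_singleton] at hx; subst hx; exact hE1)
    rw [hsumab] at hk4
    simp only [Finset.card_singleton] at hk4
    omega
  -- case (2,3)
  · exfalso
    have hk4 := key {a-1, b} ∅ hDab hDabc (by simp) (by simp)
    rw [hsumab] at hk4
    simp only [Finset.card_empty] at hk4
    omega
  -- case (2,1)
  · have ha2 : a = 2 := by omega
    have hmb : jb*(k/2) = (jb-1)*(k/2) + (k/2) := pred_mul hjb1
    have hS : S = Finset.Icc a b := by
      apply hInterval {jb+1}
        (by intro x hx; simp only [Finset.mem_singleton] at hx; subst hx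
            simp only [Finset.mem_Icc]; omega)
        (by intro x hx; simp only [Finset.mem_singleton] at hx; subst hx
            exact hER jb hjb1 hjb2 hjbf)
      simp only [hA, hB, Finset.card_singleton]
      omega
    by_cases hjb1' : jb = 1
    · refine ⟨1, by omega, by omega, ?_⟩
      rw [hS]
      unfold Qset
      have e1 : a = 2 + ((1:ℕ)-1)*(k/2) := by
        simp only [Nat.sub_self, Nat.zero_mul, Nat.add_zero]; omega
      have e2 : b = 1 + 1*(k/2) := by rw [hjbf, hjb1']
      rw [e1, e2]
    · exfalso
      -- edge jb also crosses
      have hin : 1+(jb-1)*(k/2) ∈ S := by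
        rw [hS]
        simp only [Finset.mem_Icc]
        have h1 : 1*(k/2) ≤ (jb-1)*(k/2) := Nat.mul_le_mul_right _ (by omega)
        omega
      have hout : 2+jb*(k/2) ∉ S := by
        rw [hS]
        simp only [Finset.mem_Icc]
        omega
      have hEjb : ¬((1+(jb-1)*(k/2)) ∈ S ↔ (2+jb*(k/2)) ∈ S) :=
        fun hiff => hout (hiff.mp hin)
      have hk4 := key {a-1, b} {jb, jb+1} hDab hDabc
        (by intro x hx
            simp only [Finset.mem_insert, Finset.mem_singleton] at hx
            simp only [Finset.mem_Icc]
            rcases hx with h | h <;> rw [h] <;> omega)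
        (by intro x hx
            simp only [Finset.mem_insert, Finset.mem_singleton] at hx
            rcases hx with h | h <;> rw [h]
            · exact hEjb
            · exact hER jb hjb1 hjb2 hjbf)
      rw [hsumab] at hk4
      rw [Finset.card_pair (by omega)] at hk4
      omega
  -- case (3,2)
  · exfalso
    have hk4 := key {a-1, b} ∅ hDab hDabc (by simp) (by simp)
    rw [hsumab] at hk4
    simp only [Finset.card_empty] at hk4
    omega
  -- case (3,3)
  · exfalso
    have hk4 := key {a-1, b} ∅ hDab hDabc (by simp) (by simp)
    rw [hsumab] at hk4
    simp only [Finset.card_empty] at hk4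
    omega
  -- case (3,1)
  · exfalso
    have hk4 := key {a-1, b} {jb+1} hDab hDabc
      (by intro x hx; simp only [Finset.mem_singleton] at hx; subst hx
          simp only [Finset.mem_Icc]; omega)
      (by intro x hx; simp only [Finset.mem_singleton] at hx; subst hx
          exact hER jb hjb1 hjb2 hjbf)
    rw [hsumab] at hk4
    simp only [Finset.card_singleton] at hk4
    omega
  -- case (1,2)
  · have hjaf' : a = 2 + ja*(k/2) := by omega
    have hbn : b = nn k - 1 := by omega
    have hma : (ja+1)*(k/2) = ja*(k/2) + (k/2) := by ring
    have hS : S = Finset.Icc a b := by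
      apply hInterval {ja}
        (by intro x hx; simp only [Finset.mem_singleton] at hx; rw [hx]
            simp only [Finset.mem_Icc]; omega)
        (by intro x hx; simp only [Finset.mem_singleton] at hx; rw [hx]
            exact hEL ja hja1 hja2 hjaf')
      simp only [hA, hB, Finset.card_singleton]
      omega
    by_cases hja' : ja = k-2
    · refine ⟨k-1, by omega, by omega, ?_⟩
      rw [hS]
      unfold Qset
      have e1 : a = 2 + (k-1-1)*(k/2) := by
        rw [show k-1-1 = k-2 by omega, ← hja']; exact hjaf'
      have e2 : b = 1 + (k-1)*(k/2) := by omega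
      rw [e1, e2]
    · exfalso
      -- edge ja+1 also crosses
      have hout : 1+((ja+1)-1)*(k/2) ∉ S := by
        rw [show (ja+1)-1 = ja by omega]
        have : 1+ja*(k/2) = a - 1 := by omega
        rw [this]; exact hamem
      have hin : 2+(ja+1)*(k/2) ∈ S := by
        rw [hS]
        simp only [Finset.mem_Icc]
        have m1 : (ja+1)*(k/2) ≤ (k-2)*(k/2) := Nat.mul_le_mul_right _ (by omega)
        have m2 : (k-1)*(k/2) = (k-2)*(k/2) + (k/2) := by
          rw [show k-1 = (k-2)+1 by omega, Nat.succ_mul]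
        omega
      have hEja1 : ¬((1+((ja+1)-1)*(k/2)) ∈ S ↔ (2+(ja+1)*(k/2)) ∈ S) :=
        fun hiff => hout (hiff.mpr hin)
      have hk4 := key {a-1, b} {ja, ja+1} hDab hDabc
        (by intro x hx
            simp only [Finset.mem_insert, Finset.mem_singleton] at hx
            simp only [Finset.mem_Icc]
            rcases hx with h | h <;> rw [h] <;> omega)
        (by intro x hx
            simp only [Finset.mem_insert, Finset.mem_singleton] at hx
            rcases hx with h | h <;> rw [h]
            · exact hEL ja hja1 hja2 hjaf'
            · exact hEja1)
      rw [hsumab] at hk4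
      rw [Finset.card_pair (by omega)] at hk4
      omega
  -- case (1,3)
  · exfalso
    have hjaf' : a = 2 + ja*(k/2) := by omega
    have hk4 := key {a-1, b} {ja} hDab hDabc
      (by intro x hx; simp only [Finset.mem_singleton] at hx; rw [hx]
          simp only [Finset.mem_Icc]; omega)
      (by intro x hx; simp only [Finset.mem_singleton] at hx; rw [hx]
          exact hEL ja hja1 hja2 hjaf')
    rw [hsumab] at hk4
    simp only [Finset.card_singleton] at hk4
    omega
  -- case (1,1)
  · have hjaf' : a = 2 + ja*(k/2) := by omega
    have hma : (ja+1)*(k/2) = ja*(k/2) + (k/2) := by ring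
    have hmb : jb*(k/2) = (jb-1)*(k/2) + (k/2) := pred_mul hjb1
    have hjab : ja < jb := by
      by_contra hc
      have : jb*(k/2) ≤ ja*(k/2) := Nat.mul_le_mul_right _ (by omega)
      omega
    have hS : S = Finset.Icc a b := by
      apply hInterval {ja, jb+1}
        (by intro x hx
            simp only [Finset.mem_insert, Finset.mem_singleton] at hx
            simp only [Finset.mem_Icc]
            rcases hx with h | h <;> rw [h] <;> omega)
        (by intro x hx
            simp only [Finset.mem_insert, Finset.mem_singleton] at hx
            rcases hx with h | h <;> rw [h]
            · exact hEL ja hja1 hja2 hjaf'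
            · exact hER jb hjb1 hjb2 hjbf)
      rw [Finset.card_pair (by omega)]
      omega
    by_cases hjj : jb = ja+1
    · refine ⟨ja+1, by omega, by omega, ?_⟩
      rw [hS]
      unfold Qset
      have e1 : a = 2 + (ja+1-1)*(k/2) := by
        simp only [Nat.add_sub_cancel]; exact hjaf'
      have e2 : b = 1 + (ja+1)*(k/2) := by rw [hjbf, hjj]
      rw [e1, e2]
    · exfalso
      -- edge jb also crosses
      have hin : 1+(jb-1)*(k/2) ∈ S := by
        rw [hS]
        simp only [Finset.mem_Icc]
        have m1 : (ja+1)*(k/2) ≤ (jb-1)*(k/2) := Nat.mul_le_mul_right _ (by omega)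
        omega
      have hout : 2+jb*(k/2) ∉ S := by
        rw [hS]
        simp only [Finset.mem_Icc]
        omega
      have hEjb : ¬((1+(jb-1)*(k/2)) ∈ S ↔ (2+jb*(k/2)) ∈ S) :=
        fun hiff => hout (hiff.mp hin)
      have hcard3 : ({ja, jb, jb+1} : Finset ℕ).card = 3 := by
        rw [Finset.card_insert_of_notMem (by simp; omega), Finset.card_pair (by omega)]
      have hk4 := key {a-1, b} {ja, jb, jb+1} hDab hDabc
        (by intro x hx
            simp only [Finset.mem_insert, Finset.mem_singleton] at hx
            simp only [Finset.mem_Icc]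
            rcases hx with h | h | h <;> rw [h] <;> omega)
        (by intro x hx
            simp only [Finset.mem_insert, Finset.mem_singleton] at hx
            rcases hx with h | h | h <;> rw [h]
            · exact hEL ja hja1 hja2 hjaf'
            · exact hEjb
            · exact hER jb hjb1 hjb2 hjbf)
      rw [hsumab, hcard3] at hk4
      omega

/-! ### Complement invariance -/

namespace LinksSystem

variable {k : ℕ} (LS : LinksSystem k)

lemma links_endpoints (hk : 4 ≤ k) {e : Sym2 ℕ} (he : e ∈ LS.links) :
    ∃ u v, e = s(u,v) ∧ u ∈ Finset.Icc 1 (nn k) ∧ v ∈ Finset.Icc 1 (nn k) := by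
  unfold LinksSystem.links at he
  simp only [Finset.mem_biUnion] at he
  obtain ⟨i, hi, hei⟩ := he
  unfold LinksSystem.P at hei
  by_cases hik : i = k
  · rw [if_pos hik] at hei
    simp only [Finset.mem_singleton] at hei
    refine ⟨1, nn k, hei, ?_, ?_⟩ <;> simp only [Finset.mem_Icc] <;> unfold nn <;> omega
  · rw [if_neg hik] at hei
    simp only [Finset.mem_image] at hei
    obtain ⟨t, ht, hte⟩ := hei
    simp only [Finset.mem_Icc] at hi ht
    have hi' : i ∈ Finset.Icc 1 (k-1) := by simp only [Finset.mem_Icc]; omega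
    refine ⟨LS.node i t, LS.node i (t+1), hte.symm, ?_, ?_⟩ <;> simp only [Finset.mem_Icc]
    · exact ⟨LS.node_ge1 hi' (by omega), LS.node_le hi' (by omega)⟩
    · exact ⟨LS.node_ge1 hi' (by omega), LS.node_le hi' (by omega)⟩

lemma deltaL_compl (hk : 4 ≤ k) (S : Finset ℕ) :
    deltaL LS.links S = deltaL LS.links (Finset.Icc 1 (nn k) \ S) := by
  unfold deltaL
  apply Finset.filter_congr
  intro e he
  obtain ⟨u, v, rfl, hu, hv⟩ := LS.links_endpoints hk he
  rw [cross_cond, cross_cond]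
  have hu' : u ∈ Finset.Icc 1 (nn k) \ S ↔ ¬ u ∈ S := by
    simp only [Finset.mem_sdiff, hu, true_and]
  have hv' : v ∈ Finset.Icc 1 (nn k) \ S ↔ ¬ v ∈ S := by
    simp only [Finset.mem_sdiff, hv, true_and]
  rw [hu', hv']
  tauto

end LinksSystem

lemma cutCap_compl {k : ℕ} (hk : 4 ≤ k) (hke : 2*(k/2) = k) (S : Finset ℕ) :
    cutCap k (Finset.Icc 1 (nn k) \ S) = cutCap k S := by
  have hnn := nn_eq hke
  have hq : 2 ≤ k/2 := by omega
  unfold cutCap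
  congr 1
  · apply Finset.sum_congr rfl
    intro i hi
    simp only [Finset.mem_Icc] at hi
    have h1 : i ∈ Finset.Icc 1 (nn k) := by simp only [Finset.mem_Icc]; omega
    have h2 : i+1 ∈ Finset.Icc 1 (nn k) := by simp only [Finset.mem_Icc]; omega
    have hmem1 : i ∈ Finset.Icc 1 (nn k) \ S ↔ ¬ i ∈ S := by
      simp only [Finset.mem_sdiff, h1, true_and]
    have hmem2 : i+1 ∈ Finset.Icc 1 (nn k) \ S ↔ ¬ i+1 ∈ S := by
      simp only [Finset.mem_sdiff, h2, true_and]
    by_cases h : (i ∈ S ↔ i+1 ∈ S)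
    · rw [if_pos h, if_pos]
      rw [hmem1, hmem2]
      exact not_iff_not.mpr h
    · rw [if_neg h, if_neg]
      rw [hmem1, hmem2]
      exact fun hc => h (not_iff_not.mp hc)
  · apply Finset.sum_congr rfl
    intro j hj
    simp only [Finset.mem_Icc] at hj
    have hm1 : (j-1)*(k/2) ≤ (k-1)*(k/2) := Nat.mul_le_mul_right _ (by omega)
    have hm2 : j*(k/2) ≤ (k-1)*(k/2) := Nat.mul_le_mul_right _ (by omega)
    have h1 : 1+(j-1)*(k/2) ∈ Finset.Icc 1 (nn k) := by simp only [Finset.mem_Icc]; omega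
    have h2 : 2+j*(k/2) ∈ Finset.Icc 1 (nn k) := by simp only [Finset.mem_Icc]; omega
    have hmem1 : 1+(j-1)*(k/2) ∈ Finset.Icc 1 (nn k) \ S ↔ ¬ 1+(j-1)*(k/2) ∈ S := by
      simp only [Finset.mem_sdiff, h1, true_and]
    have hmem2 : 2+j*(k/2) ∈ Finset.Icc 1 (nn k) \ S ↔ ¬ 2+j*(k/2) ∈ S := by
      simp only [Finset.mem_sdiff, h2, true_and]
    by_cases h : ((1+(j-1)*(k/2)) ∈ S ↔ (2+j*(k/2)) ∈ S)
    · rw [if_pos h, if_pos]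
      rw [hmem1, hmem2]
      exact not_iff_not.mpr h
    · rw [if_neg h, if_neg]
      rw [hmem1, hmem2]
      exact fun hc => h (not_iff_not.mp hc)

namespace LinksSystem

variable {k : ℕ} (LS : LinksSystem k)

lemma crossCount_pos {S : Finset ℕ} {i : ℕ} (hi : i ∈ Finset.Icc 1 (k-1))
    (hx : ¬(1 ∈ S ↔ nn k ∈ S)) : 1 ≤ crossCount LS S i := by
  have hne : ¬(LS.node i 0 ∈ S ↔ LS.node i (k/2+1) ∈ S) := by
    rw [LS.node_first i hi, LS.node_last i hi]; exact hx
  obtain ⟨t, -, htb, htc⟩ := exists_change (fun t => LS.node i t ∈ S) (Nat.zero_le _) hne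
  have : t ∈ (Finset.Icc 0 (k/2)).filter
      (fun t => ¬(LS.node i t ∈ S ↔ LS.node i (t+1) ∈ S)) := by
    simp only [Finset.mem_filter, Finset.mem_Icc]
    exact ⟨⟨Nat.zero_le _, by omega⟩, htc⟩
  unfold crossCount
  exact Finset.card_pos.mpr ⟨t, this⟩

lemma card_deltaL_Qset (hk : 4 ≤ k) (hke : 2*(k/2) = k) {j : ℕ}
    (hj : j ∈ Finset.Icc 1 (k-1)) :
    (deltaL LS.links (Qset k j)).card = k := by
  rw [LS.card_deltaL hk, LS.sum_crossCount_Qset hk hke hj,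
    if_pos (iff_of_false one_notMem_Qset (nn_notMem_Qset hke (Finset.mem_Icc.mp hj).2))]
  omega

end LinksSystem

/-- for every links system `L`, the vector `x*` with `x*_ℓ = 1/k` for every
link `ℓ` satisfies `Σ_{ℓ ∈ δ_L(S)} x*_ℓ ≥ 1` for every nonempty proper `S ⊆ {1, …, n}`
whose cut capacity in `G` is less than `5`, with equality whenever `S` is one of the sets
`N_1, …, N_{n-1}, Q_1, …, Q_{k-1}`. -/
theorem statement7 (k : ℕ) (hk : 4 ≤ k) (hke : Even k) (LS : LinksSystem k) :
    (∀ S : Finset ℕ, S.Nonempty → S ⊆ Finset.Icc 1 (nn k) → S ≠ Finset.Icc 1 (nn k) →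
        cutCap k S < 5 → 1 ≤ ∑ _e ∈ deltaL LS.links S, (1 / k : ℝ)) ∧
    (∀ i ∈ Finset.Icc 1 (nn k - 1), ∑ _e ∈ deltaL LS.links (Nset i), (1 / k : ℝ) = 1) ∧
    (∀ j ∈ Finset.Icc 1 (k - 1), ∑ _e ∈ deltaL LS.links (Qset k j), (1 / k : ℝ) = 1) := by
  have hke2 : 2*(k/2) = k := by obtain ⟨m, hm⟩ := hke; omega
  have hnn := nn_eq hke2
  have hq : 2 ≤ k/2 := by omega
  have hbig : 3*2 ≤ (k-1)*(k/2) := Nat.mul_le_mul (by omega) (by omega)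
  have hk0 : (0:ℝ) < (k:ℝ) := by exact_mod_cast (show 0 < k by omega)
  have hsum : ∀ F : Finset (Sym2 ℕ), (∑ _e ∈ F, (1/(k:ℝ))) = (F.card : ℝ) / k := by
    intro F
    rw [Finset.sum_const, nsmul_eq_mul]
    ring
  refine ⟨?_, ?_, ?_⟩
  · -- part 1: covering inequality for small cuts
    intro S hSne hSsub hSne' hcap
    suffices hcard : k ≤ (deltaL LS.links S).card by
      rw [hsum, le_div_iff₀ hk0, one_mul]
      exact_mod_cast hcard
    by_cases hx : (1 ∈ S ↔ nn k ∈ S)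
    · by_cases h1 : 1 ∈ S
      · -- both endpoints in S: pass to the complement
        have hnk : nn k ∈ S := hx.mp h1
        obtain ⟨x, hx1, hx2⟩ : ∃ x ∈ Finset.Icc 1 (nn k), x ∉ S := by
          by_contra hc
          push_neg at hc
          exact hSne' (Finset.Subset.antisymm hSsub hc)
        have hTne : (Finset.Icc 1 (nn k) \ S).Nonempty := ⟨x, Finset.mem_sdiff.mpr ⟨hx1, hx2⟩⟩
        have hTsub : (Finset.Icc 1 (nn k) \ S) ⊆ Finset.Icc 2 (nn k - 1) := by
          intro y hy
          rw [Finset.mem_sdiff] at hy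
          obtain ⟨hy1, hy2⟩ := hy
          simp only [Finset.mem_Icc] at hy1 ⊢
          have hne1 : y ≠ 1 := fun h => hy2 (h.symm ▸ h1)
          have hne2 : y ≠ nn k := fun h => hy2 (h ▸ hnk)
          omega
        have hTcap : cutCap k (Finset.Icc 1 (nn k) \ S) ≤ 4 := by
          rw [cutCap_compl hk hke2 S]; omega
        obtain ⟨j, hj1, hj2, hTQ⟩ := cut_classify hk hke2 hTne hTsub hTcap
        have hcd : (deltaL LS.links S).card = k := by
          rw [LS.deltaL_compl hk S, hTQ]
          exact LS.card_deltaL_Qset hk hke2 (Finset.mem_Icc.mpr ⟨hj1, hj2⟩)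
        omega
      · -- both endpoints outside S
        have hnk : nn k ∉ S := fun h => h1 (hx.mpr h)
        have hsub2 : S ⊆ Finset.Icc 2 (nn k - 1) := by
          intro y hy
          have hmem := Finset.mem_Icc.mp (hSsub hy)
          simp only [Finset.mem_Icc]
          have hne1 : y ≠ 1 := fun h => h1 (h ▸ hy)
          have hne2 : y ≠ nn k := fun h => hnk (h ▸ hy)
          omega
        obtain ⟨j, hj1, hj2, hSQ⟩ := cut_classify hk hke2 hSne hsub2 (by omega)
        have hcd : (deltaL LS.links S).card = k := by
          rw [hSQ]
          exact LS.card_deltaL_Qset hk hke2 (Finset.mem_Icc.mpr ⟨hj1, hj2⟩)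
        omega
    · -- exactly one of 1, n is in S
      have hcd := LS.card_deltaL hk S
      rw [if_neg hx] at hcd
      have hone : ∀ i ∈ Finset.Icc 1 (k-1), 1 ≤ crossCount LS S i :=
        fun i hi => LS.crossCount_pos hi hx
      have hsum1 : k-1 ≤ ∑ i ∈ Finset.Icc 1 (k-1), crossCount LS S i := by
        calc k-1 = ∑ _i ∈ Finset.Icc 1 (k-1), 1 := by
              rw [Finset.sum_const, smul_eq_mul, mul_one, Nat.card_Icc]; omega
          _ ≤ _ := Finset.sum_le_sum hone
      omega
  · -- part 2: equality on nested sets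
    intro v hv
    have hv' := Finset.mem_Icc.mp hv
    have hcd := LS.card_deltaL hk (Nset v)
    have hind : ¬(1 ∈ Nset v ↔ nn k ∈ Nset v) := by
      unfold Nset
      simp only [Finset.mem_Icc]
      omega
    rw [if_neg hind] at hcd
    have hsum1 : ∑ i ∈ Finset.Icc 1 (k-1), crossCount LS (Nset v) i = k-1 := by
      rw [Finset.sum_congr rfl (fun i hi => LS.crossCount_Nset hk hi hv'.1 hv'.2)]
      rw [Finset.sum_const, smul_eq_mul, mul_one, Nat.card_Icc]
      omega
    rw [hsum, hcd, hsum1, show k-1+1 = k by omega, div_self hk0.ne']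
  · -- part 3: equality on Q-sets
    intro j hj
    rw [hsum, LS.card_deltaL_Qset hk hke2 hj, div_self hk0.ne']

end CoverSmallCuts
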